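/- Let π be a set of primes, T a finite semigroup, and S = CP_π(T) the smallest subsemigroup of P(T) containing singletons and closed under Z ↦ Z^{ω+*} whenever Z generates a cyclic π'-group. Suppose B : S → S satisfies: B(s) = s if s is π'-free; B(s) <_H s otherwise; s ⊆ B(s); and there is a map s ↦ m_s with B(s) = s·m_s and m_s = m_{s'} whenever s L s'. Then the composition of two such operators B, B' is again such an operator, with right multiplier m_s · n_{s·m_s} (where n is the multiplier family of B'). In particular the set of preblowup operators on S is a finite semigroup, and if nonempty it contains an idempotent (a blowup operator). -/

import Mathlib

open Pointwise

/-- Multiplication of an element of a semigroup `M` by an element of `M¹ = M` with an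
adjoined identity (modelled as `Option M`, `none` being the identity `I`). -/
def hmul {M : Type*} [Mul M] (h : M) : Option M → M := fun s => s.elim h (fun u => h * u)

/-- Multiplication in `M¹` (modelled as `Option M`). -/
def omul {M : Type*} [Mul M] : Option M → Option M → Option M
  | none, t => t
  | some a, none => some a
  | some a, some b => some (a * b)

/-- `mpow a n = aⁿ` for `n ≥ 1` (with the junk value `mpow a 0 = a`). -/
def mpow {M : Type*} [Mul M] (a : M) : ℕ → M
  | 0 => a
  | 1 => a
  | n+2 => mpow a (n+1) * a

/-- Green's preorder `a ≤_L b` iff `a ∈ M¹ b`. -/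
def leL {M : Type*} [Mul M] (a b : M) : Prop := a = b ∨ ∃ u, a = u * b
/-- Green's preorder `a ≤_R b` iff `a ∈ b M¹`. -/
def leR {M : Type*} [Mul M] (a b : M) : Prop := a = b ∨ ∃ u, a = b * u
/-- Green's `L`-equivalence. -/
def eqL {M : Type*} [Mul M] (a b : M) : Prop := leL a b ∧ leL b a
/-- Green's `R`-equivalence. -/
def eqR {M : Type*} [Mul M] (a b : M) : Prop := leR a b ∧ leR b a
/-- Green's `H`-equivalence. -/
def eqH {M : Type*} [Mul M] (a b : M) : Prop := eqL a b ∧ eqR a b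
/-- `a <_H b` : `a ≤_L b`, `a ≤_R b`, but `a` is not `H`-equivalent to `b`. -/
def ltH {M : Type*} [Mul M] (a b : M) : Prop := leL a b ∧ leR a b ∧ ¬ eqH a b

/-- The `H`-class of `a`, as a type. -/
def HclsT {M : Type*} [Mul M] (a : M) := {x : M // eqH x a}

/-- The (right) Schützenberger group of the `H`-class of `a`: the set of transformations of the
`H`-class of `a` induced by right multiplication by elements of the right stabilizer in `M¹`. -/
def gammaR {M : Type*} [Mul M] (a : M) : Set (HclsT a → HclsT a) :=
  {f | ∃ s : Option M, (∀ h : HclsT a, eqH (hmul h.1 s) a) ∧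
        ∀ h : HclsT a, (f h).1 = hmul h.1 s}

/-- An element is `π'`-free if the Schützenberger group of its (`J`-class, equivalently its)
`H`-class is a `π`-group: every prime dividing its order lies in `π`. -/
def piFree {M : Type*} [Mul M] (π : Set ℕ) (a : M) : Prop :=
  ∀ p : ℕ, p.Prime → p ∣ (gammaR a).ncard → p ∈ π

/-- Membership in `CP_π(T)`: the smallest subsemigroup of `P(T)` containing the singletons and
closed under `Z ↦ Z^{ω+*} = ⋃_{n ≥ 1} Zⁿ` whenever `Z` generates a cyclic `π'`-group
(i.e. `Z` is a group element of order `k` divisible only by primes outside `π`). -/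
inductive CPmem (π : Set ℕ) {T : Type} [Semigroup T] : Set T → Prop
  | single (t : T) : CPmem π {t}
  | mul {X Y : Set T} : CPmem π X → CPmem π Y → CPmem π (X * Y)
  | omega {Z : Set T} (k : ℕ) (hk : 0 < k) (hcyc : mpow Z (k+1) = Z)
      (hπ : ∀ p : ℕ, p.Prime → p ∣ k → p ∉ π) :
      CPmem π Z → CPmem π (⋃ n, mpow Z (n+1))

/-- The semigroup `CP_π(T)`, as a subsemigroup of `P(T)`. -/
def CPT (π : Set ℕ) (T : Type) [Semigroup T] : Type := {X : Set T // CPmem π X}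

noncomputable instance {π : Set ℕ} {T : Type} [Semigroup T] : Mul (CPT π T) :=
  ⟨fun a b => ⟨a.1 * b.1, CPmem.mul a.2 b.2⟩⟩

noncomputable instance {π : Set ℕ} {T : Type} [Semigroup T] : Semigroup (CPT π T) :=
  { (inferInstanceAs (Mul (CPT π T)) : Mul (CPT π T)) with
    mul_assoc := fun a b c => Subtype.ext (mul_assoc a.1 b.1 c.1) }

/-- A preblowup operator on `S = CP_π(T)`: `B` fixes `π'`-free elements, strictly `H`-decreases
non-`π'`-free elements, blows elements up (`s ⊆ B(s)` as subsets of `T`), and is given by right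
multiplication `B(s) = s·m_s` by multipliers `m_s ∈ S¹` constant on `L`-classes. -/
def IsPreblowup (π : Set ℕ) (T : Type) [Semigroup T]
    (B : CPT π T → CPT π T) (m : CPT π T → Option (CPT π T)) : Prop :=
  (∀ s, piFree π s → B s = s) ∧
  (∀ s, ¬ piFree π s → ltH (B s) s) ∧
  (∀ s, s.1 ⊆ (B s).1) ∧
  (∀ s, B s = hmul s (m s)) ∧
  (∀ s s', eqL s s' → m s = m s')

section Helpers

variable {M : Type*} [Semigroup M]

theorem leL_trans {a b c : M} (h1 : leL a b) (h2 : leL b c) : leL a c := by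
  rcases h1 with rfl | ⟨u, rfl⟩ <;> rcases h2 with rfl | ⟨v, rfl⟩
  · exact Or.inl rfl
  · exact Or.inr ⟨v, rfl⟩
  · exact Or.inr ⟨u, rfl⟩
  · exact Or.inr ⟨u * v, (mul_assoc u v c).symm⟩

theorem leR_trans {a b c : M} (h1 : leR a b) (h2 : leR b c) : leR a c := by
  rcases h1 with rfl | ⟨u, rfl⟩ <;> rcases h2 with rfl | ⟨v, rfl⟩
  · exact Or.inl rfl
  · exact Or.inr ⟨v, rfl⟩
  · exact Or.inr ⟨u, rfl⟩
  · exact Or.inr ⟨v * u, mul_assoc c v u⟩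

theorem ltH_trans {a b c : M} (h1 : ltH a b) (h2 : ltH b c) : ltH a c := by
  obtain ⟨hl1, hr1, hn1⟩ := h1
  obtain ⟨hl2, hr2, hn2⟩ := h2
  refine ⟨leL_trans hl1 hl2, leR_trans hr1 hr2, fun heq => ?_⟩
  obtain ⟨⟨_, hlca⟩, ⟨_, hrca⟩⟩ := heq
  exact hn2 ⟨⟨hl2, leL_trans hlca hl1⟩, ⟨hr2, leR_trans hrca hr1⟩⟩

theorem hmul_hmul (s : M) (u v : Option M) :
    hmul (hmul s u) v = hmul s (omul u v) := by
  cases u <;> cases v <;> simp [hmul, omul, mul_assoc]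

theorem leL_hmul {a b : M} (h : leL a b) (u : Option M) :
    leL (hmul a u) (hmul b u) := by
  cases u with
  | none => exact h
  | some w =>
    rcases h with rfl | ⟨v, rfl⟩
    · exact Or.inl rfl
    · exact Or.inr ⟨v, mul_assoc v b w⟩

theorem eqL_hmul {a b : M} (h : eqL a b) (u : Option M) :
    eqL (hmul a u) (hmul b u) := ⟨leL_hmul h.1 u, leL_hmul h.2 u⟩

end Helpers

theorem comp_preblowup (π : Set ℕ) (T : Type) [Semigroup T]
    (B B' : CPT π T → CPT π T) (m n : CPT π T → Option (CPT π T))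
    (hB : IsPreblowup π T B m) (hB' : IsPreblowup π T B' n) :
    IsPreblowup π T (fun s => B' (B s)) (fun s => omul (m s) (n (B s))) := by
  obtain ⟨hfix, hlt, hsub, hmulB, hL⟩ := hB
  obtain ⟨hfix', hlt', hsub', hmulB', hL'⟩ := hB'
  refine ⟨?_, ?_, ?_, ?_, ?_⟩
  · intro s hs
    show B' (B s) = s
    rw [hfix s hs]
    exact hfix' s hs
  · intro s hs
    show ltH (B' (B s)) s
    by_cases h : piFree π (B s)
    · rw [hfix' _ h]; exact hlt s hs
    · exact ltH_trans (hlt' _ h) (hlt s hs)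
  · intro s
    exact Set.Subset.trans (hsub s) (hsub' (B s))
  · intro s
    show B' (B s) = hmul s (omul (m s) (n (B s)))
    rw [hmulB' (B s), hmulB s]
    exact hmul_hmul s (m s) (n (hmul s (m s)))
  · intro s s' hss
    show omul (m s) (n (B s)) = omul (m s') (n (B s'))
    have hm : m s = m s' := hL s s' hss
    have hBeq : eqL (B s) (B s') := by
      rw [hmulB s, hmulB s', hm]
      exact eqL_hmul hss (m s')
    rw [hm, hL' _ _ hBeq]

instance {π : Set ℕ} {T : Type} [Semigroup T] [Fintype T] : Finite (CPT π T) :=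
  inferInstanceAs (Finite {X : Set T // CPmem π X})

theorem iterate_preblowup (π : Set ℕ) (T : Type) [Semigroup T]
    (C : CPT π T → CPT π T) (m : CPT π T → Option (CPT π T))
    (hC : IsPreblowup π T C m) (k : ℕ) :
    ∃ m', IsPreblowup π T (C^[k + 1]) m' := by
  induction k with
  | zero => exact ⟨m, hC⟩
  | succ k ih =>
    obtain ⟨m', hm'⟩ := ih
    refine ⟨fun s => omul (m' s) (m (C^[k + 1] s)), ?_⟩
    rw [Function.iterate_succ']
    exact comp_preblowup π T (C^[k + 1]) C m' m hm' hC

/-- The composition of two preblowup operators on `S = CP_π(T)` is a preblowup operator, with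
right multiplier `m_s · n_{s·m_s}`.  In particular the set of preblowup operators on `S` is a
finite semigroup, and if it is nonempty it contains an idempotent: a blowup operator. -/
theorem stmt_12 (π : Set ℕ) (T : Type) [Semigroup T] [Fintype T]
    (B B' : CPT π T → CPT π T) (m n : CPT π T → Option (CPT π T))
    (hB : IsPreblowup π T B m) (hB' : IsPreblowup π T B' n) :
    IsPreblowup π T (fun s => B' (B s)) (fun s => omul (m s) (n (B s))) ∧
    Set.Finite {C : CPT π T → CPT π T | ∃ m', IsPreblowup π T C m'} ∧
    ((∃ C m', IsPreblowup π T C m') →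
      ∃ (C : CPT π T → CPT π T) (m' : CPT π T → Option (CPT π T)),
        IsPreblowup π T C m' ∧ ∀ s, C (C s) = C s) := by
  refine ⟨comp_preblowup π T B B' m n hB hB', Set.toFinite _, ?_⟩
  rintro ⟨C, mC, hC⟩
  -- pigeonhole on the iterates of `C`
  obtain ⟨a, b, hab, heq⟩ :
      ∃ a b : ℕ, a ≠ b ∧ C^[a] = C^[b] := by
    obtain ⟨a, b, hab, h⟩ := Finite.exists_ne_map_eq_of_infinite (fun k : ℕ => C^[k])
    exact ⟨a, b, hab, h⟩
  wlog hlt : a < b generalizing a b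
  · exact this b a (Ne.symm hab) heq.symm (by omega)
  set d := b - a with hd
  have hd0 : 0 < d := by omega
  have hper : ∀ i, a ≤ i → C^[i + d] = C^[i] := by
    intro i hi
    have h1 : i + d = (i - a) + b := by omega
    have h2 : (i - a) + a = i := by omega
    rw [h1, Function.iterate_add, ← heq, ← Function.iterate_add, h2]
  have hper' : ∀ k i, a ≤ i → C^[i + k * d] = C^[i] := by
    intro k
    induction k with
    | zero => intro i _; simp
    | succ k ih =>
      intro i hi
      have : i + (k + 1) * d = (i + d) + k * d := by ring
      rw [this, ih (i + d) (by omega), hper i hi]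
  have haux : a + 1 ≤ d * (a + 1) := Nat.le_mul_of_pos_left (a + 1) hd0
  set N := d * (a + 1) with hN
  have hNa : a ≤ N := by omega
  have hidem : C^[N + N] = C^[N] := by
    have : N + N = N + (a + 1) * d := by rw [hN]; ring
    rw [this, hper' (a + 1) N hNa]
  have hN1 : 1 ≤ N := by omega
  obtain ⟨m', hm'⟩ := iterate_preblowup π T C mC hC (N - 1)
  have hNeq : N - 1 + 1 = N := by omega
  rw [hNeq] at hm'
  refine ⟨C^[N], m', hm', fun s => ?_⟩
  calc C^[N] (C^[N] s) = C^[N + N] s := (Function.iterate_add_apply C N N s).symm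
    _ = C^[N] s := by rw [hidem]
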